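/- Let n be a natural number and let G, V : [0,1] → ℝ be Lipschitz functions with G(t) > 0 and V(t) > 0 for all t, such that for all 0 ≤ s ≤ t ≤ 1 one has G(t) ≥ G(s)·(n + 1 − n·V(s)/V(t)). Then G(1) ≥ G(0)·(V(1)/V(0))^n. -/

import Mathlib

set_option maxHeartbeats 1000000


/-- Differential-inequality argument: if `G, V` are Lipschitz and positive on
`[0,1]` and `G(t) ≥ G(s)·(n + 1 - n·V(s)/V(t))` for `0 ≤ s ≤ t ≤ 1`, then
`G(1) ≥ G(0)·(V(1)/V(0))^n`. -/
theorem stmt9 (n : ℕ) (G V : ℝ → ℝ)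
    (hG : ∃ K, LipschitzOnWith K G (Set.Icc 0 1))
    (hV : ∃ K, LipschitzOnWith K V (Set.Icc 0 1))
    (hGpos : ∀ t ∈ Set.Icc (0 : ℝ) 1, 0 < G t)
    (hVpos : ∀ t ∈ Set.Icc (0 : ℝ) 1, 0 < V t)
    (h : ∀ s t : ℝ, 0 ≤ s → s ≤ t → t ≤ 1 →
      G s * ((n : ℝ) + 1 - n * V s / V t) ≤ G t) :
    G 0 * (V 1 / V 0) ^ n ≤ G 1 := by
  have h01 : (0:ℝ) ∈ Set.Icc (0:ℝ) 1 := by constructor <;> norm_num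
  have h11 : (1:ℝ) ∈ Set.Icc (0:ℝ) 1 := by constructor <;> norm_num
  have hG0 : 0 < G 0 := hGpos 0 h01
  have hV0 : 0 < V 0 := hVpos 0 h01
  have hV1 : 0 < V 1 := hVpos 1 h11
  -- trivial case n = 0
  rcases Nat.eq_zero_or_pos n with hn0 | hn1
  · subst hn0
    have := h 0 1 le_rfl zero_le_one le_rfl
    simpa using this
  obtain ⟨KV, hVlip⟩ := hV
  -- positive lower bound on V over [0,1]
  obtain ⟨x₀, hx₀, hmin⟩ := isCompact_Icc.exists_isMinOn (Set.nonempty_Icc.2 zero_le_one)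
    hVlip.continuousOn
  set m := V x₀ with hm_def
  have hm : 0 < m := hVpos x₀ hx₀
  have hVlb : ∀ t ∈ Set.Icc (0:ℝ) 1, m ≤ V t := fun t ht => hmin ht
  set L : ℝ := (KV : ℝ) / m with hL_def
  have hL : 0 ≤ L := div_nonneg KV.coe_nonneg hm.le
  set Q : ℝ := G 0 * (V 1 / V 0) ^ n with hQ_def
  have hQpos : 0 < Q := mul_pos hG0 (pow_pos (div_pos hV1 hV0) n)
  clear_value m L Q
  -- main estimate for each small ε
  have main : ∀ ε : ℝ, 0 < ε → ε ≤ 1 → Q * (1 - ε) ≤ G 1 := by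
    intro ε hε hε1
    obtain ⟨N, hN⟩ := exists_nat_ge (max (max ((n:ℝ) * L) ((n:ℝ)^2 * L^2 / ε)) 1)
    have hN1 : (1:ℝ) ≤ N := le_trans (le_max_right _ _) hN
    have hNpos : (0:ℝ) < N := lt_of_lt_of_le zero_lt_one hN1
    have hNL : (n:ℝ) * L ≤ N := le_trans (le_trans (le_max_left _ _) (le_max_left _ _)) hN
    have hNL2 : (n:ℝ)^2 * L^2 / ε ≤ N :=
      le_trans (le_trans (le_max_right _ _) (le_max_left _ _)) hN
    have hNL2' : (n:ℝ)^2 * L^2 ≤ ε * N := by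
      rw [div_le_iff₀ hε] at hNL2; linarith
    have hinv : (0:ℝ) < 1/N := by positivity
    have hNinv : (N:ℝ) * (1/N) = 1 := by field_simp
    have hεN : ε / N ≤ 1 := by rw [div_le_one hNpos]; linarith
    have hεN0 : 0 ≤ 1 - ε / N := by linarith
    -- membership of partition points
    have hmem : ∀ i : ℕ, i ≤ N → (i:ℝ)/N ∈ Set.Icc (0:ℝ) 1 := by
      intro i hi
      constructor
      · positivity
      · rw [div_le_one hNpos]; exact_mod_cast hi
    -- the inductive claim
    have claim : ∀ i : ℕ, i ≤ N →
        G 0 * (V ((i:ℝ)/N) / V 0) ^ n * (1 - ε/N)^i ≤ G ((i:ℝ)/N) := by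
      intro i hi
      induction i with
      | zero =>
        simp only [Nat.cast_zero, zero_div, pow_zero, mul_one]
        rw [div_self hV0.ne', one_pow, mul_one]
      | succ i ih =>
        have hi' : i ≤ N := Nat.le_of_succ_le hi
        have ihh := ih hi'
        set s : ℝ := (i:ℝ)/N with hs_def
        set t : ℝ := ((i+1:ℕ):ℝ)/N with ht_def
        have hsmem : s ∈ Set.Icc (0:ℝ) 1 := hmem i hi'
        have htmem : t ∈ Set.Icc (0:ℝ) 1 := hmem (i+1) hi
        have hVs : 0 < V s := hVpos s hsmem
        have hVt : 0 < V t := hVpos t htmem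
        have hGs : 0 < G s := hGpos s hsmem
        have hVtm : m ≤ V t := hVlb t htmem
        have hst : t - s = 1/N := by
          rw [hs_def, ht_def]; push_cast; field_simp; ring
        have hsle : s ≤ t := by linarith
        -- Lipschitz bound
        have hdist : |V t - V s| ≤ (KV:ℝ) * (1/N) := by
          have h' := hVlip.dist_le_mul t htmem s hsmem
          rw [Real.dist_eq, Real.dist_eq] at h'
          rwa [abs_of_nonneg (by linarith : (0:ℝ) ≤ t - s), hst] at h'
        have hdist1 : V t - V s ≤ (KV:ℝ) * (1/N) := le_trans (le_abs_self _) hdist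
        have hdist2 : V s - V t ≤ (KV:ℝ) * (1/N) := by
          have := neg_abs_le (V t - V s)
          linarith
        set u : ℝ := 1 - V s / V t with hu_def
        clear_value s t u
        have huv : u = (V t - V s) / V t := by
          rw [hu_def, sub_div, div_self hVt.ne']
        have hLN : L * (1/N) = ((KV:ℝ) * (1/N)) / m := by
          rw [hL_def]; ring
        have hub : u ≤ L * (1/N) := by
          rw [huv, hLN]
          exact div_le_div₀ (by positivity) hdist1 hm hVtm
        have hlb : -(L * (1/N)) ≤ u := by
          rw [huv, hLN, neg_le, show -((V t - V s)/V t) = (V s - V t)/V t by ring]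
          exact div_le_div₀ (by positivity) hdist2 hm hVtm
        -- numeric bounds
        have h1 : (n:ℝ) * (L * (1/N)) ≤ 1 := by
          calc (n:ℝ) * (L * (1/N)) = ((n:ℝ)*L)*(1/N) := by ring
            _ ≤ (N:ℝ) * (1/N) := mul_le_mul_of_nonneg_right hNL hinv.le
            _ = 1 := hNinv
        have hnu_lb : 0 ≤ 1 + (n:ℝ) * u := by
          have h2 := mul_le_mul_of_nonneg_left hlb (Nat.cast_nonneg (α := ℝ) n)
          rw [mul_neg] at h2
          linarith
        have hu2 : -2 ≤ -u := by
          have hn1' : (1:ℝ) ≤ (n:ℝ) := by exact_mod_cast hn1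
          have : L * (1/N) ≤ (n:ℝ) * (L * (1/N)) :=
            le_mul_of_one_le_left (by positivity) hn1'
          linarith
        have hsq : ((n:ℝ)*u)^2 ≤ ε * (1/N) := by
          have h4 : u^2 ≤ (L*(1/N))^2 := sq_le_sq' hlb hub
          have h5 := mul_le_mul_of_nonneg_left h4 (sq_nonneg ((n:ℝ)))
          have h7 : (ε * N) * ((1/N)*(1/N)) = ε * (1/N) := by
            field_simp
          calc ((n:ℝ)*u)^2 = (n:ℝ)^2 * u^2 := by ring
            _ ≤ (n:ℝ)^2 * (L*(1/N))^2 := h5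
            _ = ((n:ℝ)^2 * L^2) * ((1/N)*(1/N)) := by ring
            _ ≤ (ε * N) * ((1/N)*(1/N)) :=
                mul_le_mul_of_nonneg_right hNL2' (by positivity)
            _ = ε * (1/N) := h7
        -- Bernoulli
        have hber : 1 - (n:ℝ)*u ≤ (1-u)^n := by
          have hb := one_add_mul_le_pow hu2 n
          calc 1 - (n:ℝ)*u = 1 + (n:ℝ)*(-u) := by ring
            _ ≤ (1 + -u)^n := hb
            _ = (1-u)^n := by rw [show (1:ℝ) + -u = 1 - u by ring]
        have hkey : 1 - ε/N ≤ (1 + (n:ℝ)*u)*(1-u)^n := by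
          have hmm := mul_le_mul_of_nonneg_left hber hnu_lb
          have hdd : ε / N = ε * (1/N) := by ring
          nlinarith [hmm, hsq]
        -- the step inequality from the hypothesis
        have hstep : G s * (1 + (n:ℝ)*u) ≤ G t := by
          have h' := h s t hsmem.1 hsle htmem.2
          have heq : (n:ℝ) + 1 - (n:ℝ) * V s / V t = 1 + (n:ℝ)*u := by
            rw [hu_def]; ring
          rwa [heq] at h'
        have hone : (V t / V s) * (1 - u) = 1 := by
          rw [hu_def]
          field_simp [hVs.ne', hVt.ne']
          ring
        have key2 : G s * (V t/V s)^n * (1 - ε/N) ≤ G t := by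
          have h0 : 0 ≤ G s * (V t/V s)^n := by positivity
          calc G s * (V t/V s)^n * (1-ε/N)
              ≤ G s * (V t/V s)^n * ((1 + (n:ℝ)*u)*(1-u)^n) :=
                mul_le_mul_of_nonneg_left hkey h0
            _ = G s * (1 + (n:ℝ)*u) * ((V t/V s)*(1-u))^n := by
                rw [mul_pow]; ring
            _ = G s * (1 + (n:ℝ)*u) := by rw [hone, one_pow, mul_one]
            _ ≤ G t := hstep
        have hfac : 0 ≤ (V t/V s)^n * (1 - ε/N) := by positivity
        have hvv : (V s / V 0)^n * (V t / V s)^n = (V t / V 0)^n := by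
          rw [← mul_pow]
          congr 1
          field_simp [hVs.ne', hV0.ne', hVt.ne']
        calc G 0 * (V t / V 0) ^ n * (1 - ε/N)^(i+1)
            = (G 0 * (V s/V 0)^n * (1-ε/N)^i) * ((V t/V s)^n * (1-ε/N)) := by
              rw [pow_succ, ← hvv]; ring
          _ ≤ G s * ((V t/V s)^n * (1-ε/N)) := mul_le_mul_of_nonneg_right ihh hfac
          _ = G s * (V t/V s)^n * (1-ε/N) := by ring
          _ ≤ G t := key2
    have hfinal := claim N le_rfl
    rw [div_self hNpos.ne'] at hfinal
    have hber2 : 1 - ε ≤ (1 - ε/N)^N := by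
      have hb := one_add_mul_le_pow (show (-2:ℝ) ≤ -(ε/N) by linarith) N
      have : (N:ℝ) * (ε/N) = ε := by field_simp
      calc 1 - ε = 1 + (N:ℝ)*(-(ε/N)) := by rw [mul_neg, this]; ring
        _ ≤ (1 + -(ε/N))^N := hb
        _ = (1 - ε/N)^N := by rw [show (1:ℝ) + -(ε/N) = 1 - ε/N by ring]
    calc Q * (1 - ε) ≤ Q * (1 - ε/N)^N := mul_le_mul_of_nonneg_left hber2 hQpos.le
      _ ≤ G 1 := by rw [hQ_def]; exact hfinal
  -- conclude by letting ε → 0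
  have : Q ≤ G 1 := by
    refine le_of_forall_pos_le_add fun η hη => ?_
    set ε : ℝ := min 1 (η/Q) with hε_def
    have hε : 0 < ε := lt_min zero_lt_one (div_pos hη hQpos)
    have hε1 : ε ≤ 1 := min_le_left _ _
    have h1 := main ε hε hε1
    have h2 : ε * Q ≤ η := by
      have := mul_le_mul_of_nonneg_right (min_le_right 1 (η/Q)) hQpos.le
      rwa [div_mul_cancel₀ _ hQpos.ne'] at this
    nlinarith
  exact this
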